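/- arXiv:2207.05479 — 3 statements merged into one kernel-verified Lean document; each statement's English description precedes it below -/
import Mathlib

section
/- There exists a family S of q^2 + 1 two-dimensional subspaces of F_q^4 such that every nonzero vector of F_q^4 lies in exactly one member of S (equivalently, any two distinct members of S intersect only in the zero vector and the members of S cover F_q^4). -/
open Polynomial

universe u

theorem aux_card (F : Type u) [Field F] [Fintype F] :
    ∃ (K : Type u) (_ : Field K) (_ : Algebra F K) (_ : Fintype K),
      Fintype.card K = Fintype.card F ^ 2 := by
  obtain ⟨p, hcp⟩ := CharP.exists F
  haveI : CharP F p := hcp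
  obtain ⟨m, hpm, hcard⟩ := FiniteField.card F p
  haveI hfact : Fact p.Prime := ⟨hpm⟩
  have hp1 : 1 < p := hpm.one_lt
  set g : F[X] := X ^ p ^ (2 * (m : ℕ)) - X with hg
  have h2m : (2 * (m : ℕ)) ≠ 0 := by positivity
  set K := SplittingField g with hK
  haveI : Finite K := Module.finite_of_finite F
  haveI : Fintype K := Fintype.ofFinite K
  haveI : CharP K p := (Algebra.charP_iff F K p).mp hcp
  refine ⟨K, inferInstance, inferInstance, inferInstance, ?_⟩
  have aux : g ≠ 0 := FiniteField.X_pow_card_pow_sub_X_ne_zero _ h2m hp1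
  have key : Fintype.card (g.rootSet K) = g.natDegree :=
    card_rootSet_eq_natDegree (galois_poly_separable p _ (dvd_pow (dvd_refl p) h2m))
      (SplittingField.splits g)
  have nat_degree_eq : g.natDegree = p ^ (2 * (m : ℕ)) :=
    FiniteField.X_pow_card_pow_sub_X_natDegree_eq _ h2m hp1
  rw [nat_degree_eq] at key
  have huniv : g.rootSet K = Set.univ := by
    rw [Set.eq_univ_iff_forall]
    suffices h : ∀ (x) (_ : x ∈ (⊤ : Subalgebra F K)), x ∈ g.rootSet K by simpa using h
    rw [← SplittingField.adjoin_rootSet]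
    simp_rw [Algebra.mem_adjoin_iff]
    intro x hx
    refine Subring.closure_induction ?_ ?_ ?_ ?_ ?_ ?_ hx <;> simp_rw [mem_rootSet_of_ne aux]
    · rintro x (⟨r, rfl⟩ | hx)
      · simp only [g, map_sub, map_pow, aeval_X]
        rw [← map_pow]
        have hr : r ^ p ^ (2 * (m : ℕ)) = r := by
          have h2 : p ^ (2 * (m : ℕ)) = Fintype.card F ^ 2 := by
            rw [hcard, ← pow_mul, mul_comm]
          rw [h2]
          exact FiniteField.pow_card_pow 2 r
        rw [hr, sub_self]
      · rwa [mem_rootSet_of_ne aux] at hx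
    · rw [← coeff_zero_eq_aeval_zero']
      simp only [g, coeff_X_pow, coeff_X_zero, sub_zero, _root_.map_eq_zero, ite_eq_right_iff,
        one_ne_zero, coeff_sub]
      intro hn
      exact Nat.not_lt_zero 1 (eq_zero_of_pow_eq_zero hn.symm ▸ hp1)
    · simp [g]
    · simp only [g, aeval_X_pow, aeval_X, map_sub, add_pow_char_pow, sub_eq_zero]
      intro x y _ _ hx hy
      rw [hx, hy]
    · intro x _ hx
      simp only [g, sub_eq_zero, aeval_X_pow, aeval_X, map_sub, sub_neg_eq_add] at *
      rw [neg_pow, hx, neg_one_pow_char_pow]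
      ring
    · simp only [g, aeval_X_pow, aeval_X, map_sub, mul_pow, sub_eq_zero]
      intro x y _ _ hx hy
      rw [hx, hy]
  have hcK : Fintype.card K = p ^ (2 * (m : ℕ)) := by
    rw [← key]
    exact Fintype.card_congr ((Equiv.setCongr huniv).trans (Equiv.Set.univ K)).symm
  rw [hcK, hcard, ← pow_mul, mul_comm]

/-- There exists a spread of lines in `PG(3,q)`: a family of `q^2 + 1`
2-dimensional subspaces of `F_q^4` such that every nonzero vector lies in exactly
one member of the family. -/
theorem stmt_4 (q : ℕ) (F : Type*) [Field F] [Fintype F] (hq : Fintype.card F = q) :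
    ∃ S : Finset (Submodule F (Fin 4 → F)),
      S.card = q ^ 2 + 1 ∧ (∀ W ∈ S, Module.finrank F W = 2) ∧
      ∀ v : Fin 4 → F, v ≠ 0 → ∃! W : Submodule F (Fin 4 → F), W ∈ S ∧ v ∈ W := by
  classical
  subst hq
  obtain ⟨K, _, _, _, hK⟩ := aux_card F
  have hq1 : 1 < Fintype.card F := Fintype.one_lt_card
  haveI : Module.Finite F K := Module.Finite.of_finite (R := F) (M := K)
  have hr2 : Module.finrank F K = 2 := by
    have h := Module.card_eq_pow_finrank (K := F) (V := K)
    rw [hK] at h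
    exact (Nat.pow_right_injective hq1 h.symm)
  haveI : Module.Finite F (Fin 2 → K) := Module.Finite.of_finite (R := F)
  have hrKV : Module.finrank K (Fin 2 → K) = 2 := by simp
  have hrFV : Module.finrank F (Fin 2 → K) = 4 := by
    rw [← Module.finrank_mul_finrank F K (Fin 2 → K), hr2, hrKV]
  have hrF4 : Module.finrank F (Fin 4 → F) = 4 := by simp
  obtain ⟨e⟩ := FiniteDimensional.nonempty_linearEquiv_of_finrank_eq
    (hrF4.trans hrFV.symm)
  set w : Option K → (Fin 2 → K) :=
    fun t => Option.elim t ![0, 1] (fun a => ![1, a]) with hw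
  have hw0 : ∀ t, w t ≠ 0 := by
    rintro (_ | a) h
    · have := congrFun h 1; simp [w] at this
    · have := congrFun h 0; simp [w] at this
  set L : Option K → Submodule K (Fin 2 → K) := fun t => K ∙ w t with hL
  set Φ : Submodule K (Fin 2 → K) → Submodule F (Fin 4 → F) :=
    fun W => (W.restrictScalars F).map (e.symm : (Fin 2 → K) →ₗ[F] (Fin 4 → F)) with hΦ
  have hmem : ∀ (Wk : Submodule K (Fin 2 → K)) (v : Fin 4 → F), v ∈ Φ Wk ↔ e v ∈ Wk := by
    intro Wk v
    rw [hΦ]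
    rw [Submodule.mem_map_equiv]
    simp
  have hspan : ∀ (t) (u : Fin 2 → K), u ∈ L t ↔ ∃ c : K, c • w t = u :=
    fun t u => Submodule.mem_span_singleton
  -- exactly one line through each nonzero vector
  have hexu : ∀ u : Fin 2 → K, u ≠ 0 → ∃! t : Option K, u ∈ L t := by
    intro u hu
    by_cases h0 : u 0 = 0
    · have h1 : u 1 ≠ 0 := by
        intro h1
        apply hu
        funext i; fin_cases i <;> assumption
      refine ⟨none, ?_, ?_⟩
      · show u ∈ L none
        rw [hspan]
        exact ⟨u 1, by funext i; fin_cases i <;> simp [w, h0]⟩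
      · rintro (_ | a) ht
        · rfl
        · exfalso
          rw [hspan] at ht; obtain ⟨c, hc⟩ := ht
          have hc0 := congrFun hc 0
          have hc1 := congrFun hc 1
          simp [w] at hc0 hc1
          rw [h0] at hc0
          rw [hc0] at hc1
          simp at hc1
          exact h1 hc1.symm
    · refine ⟨some ((u 0)⁻¹ * u 1), ?_, ?_⟩
      · show u ∈ L _
        rw [hspan]
        refine ⟨u 0, ?_⟩
        funext i; fin_cases i <;> simp [w]
        field_simp
      · rintro (_ | a) ht
        · exfalso
          rw [hspan] at ht; obtain ⟨c, hc⟩ := ht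
          have hc0 := congrFun hc 0
          simp [w] at hc0
          exact h0 hc0.symm
        · rw [hspan] at ht; obtain ⟨c, hc⟩ := ht
          have hc0 := congrFun hc 0
          have hc1 := congrFun hc 1
          simp [w] at hc0 hc1
          subst hc0
          rw [← hc1]
          congr 1
          field_simp
  have hLinj : Function.Injective L := by
    intro t t' htt
    have h1 : w t ∈ L t := by rw [hspan]; exact ⟨1, one_smul _ _⟩
    have h2 : w t ∈ L t' := by rw [← htt]; exact h1
    obtain ⟨s, _, hs⟩ := hexu (w t) (hw0 t)
    rw [hs t h1, hs t' h2]
  have hΦinj : Function.Injective Φ := by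
    intro W W' h
    rw [hΦ] at h
    have := Submodule.map_injective_of_injective (f := (e.symm : (Fin 2 → K) →ₗ[F] (Fin 4 → F)))
      e.symm.injective h
    exact Submodule.restrictScalars_injective F K (Fin 2 → K) this
  refine ⟨(Finset.univ : Finset (Option K)).image (fun t => Φ (L t)), ?_, ?_, ?_⟩
  · rw [Finset.card_image_of_injective _ (show Function.Injective (fun t => Φ (L t)) from hΦinj.comp hLinj), Finset.card_univ, Fintype.card_option, hK]
  · intro W hW
    obtain ⟨t, _, rfl⟩ := Finset.mem_image.mp hW
    have e1 : Module.finrank F (Φ (L t)) = Module.finrank F ((L t).restrictScalars F) :=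
      LinearEquiv.finrank_map_eq e.symm _
    have e2 : Module.finrank K ((L t).restrictScalars F) = 1 := by
      rw [LinearEquiv.finrank_eq (Submodule.restrictScalarsEquiv F K (Fin 2 → K) (L t))]
      exact finrank_span_singleton (hw0 t)
    have e3 := Module.finrank_mul_finrank F K ((L t).restrictScalars F)
    rw [hr2, e2, mul_one] at e3
    rw [e1, ← e3]
  · intro v hv
    have hu : e v ≠ 0 := by
      intro h
      exact hv (by simpa using congrArg e.symm h)
    obtain ⟨t, ht, hts⟩ := hexu (e v) hu
    refine ⟨Φ (L t), ⟨Finset.mem_image_of_mem _ (Finset.mem_univ t), (hmem _ _).mpr ht⟩, ?_⟩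
    rintro W ⟨hWS, hvW⟩
    obtain ⟨t', _, rfl⟩ := Finset.mem_image.mp hWS
    rw [hts t' ((hmem _ _).mp hvW)]
end

section
/- Let C be a set of binary vectors of length n, each of Hamming weight w, such that any two distinct elements of C have Hamming distance at least 2δ, and let M = |C|. Then M · (w^2 − w·n + δ·n) ≤ δ·n. -/
open Finset

lemma zmod2_ind (a b : ZMod 2) :
    2 * (if a ≠ 0 ∧ b ≠ 0 then (1:ℕ) else 0) + (if a ≠ b then 1 else 0)
      = (if a ≠ 0 then 1 else 0) + (if b ≠ 0 then 1 else 0) := by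
  revert a b; decide

lemma inter_card (n : ℕ) (c c' : Fin n → ZMod 2) :
    2 * #{i | c i ≠ 0 ∧ c' i ≠ 0} + hammingDist c c'
      = hammingNorm c + hammingNorm c' := by
  unfold hammingDist hammingNorm
  simp only [Finset.card_filter]
  rw [Finset.mul_sum, ← Finset.sum_add_distrib, ← Finset.sum_add_distrib]
  exact Finset.sum_congr rfl fun i _ => zmod2_ind (c i) (c' i)

/-- Restricted Johnson bound for binary constant weight codes: if `C` is a set of
binary vectors of length `n`, each of Hamming weight `w`, with pairwise Hamming
distance at least `2δ`, and `M = |C|`, then `M(w² − wn + δn) ≤ δn`. -/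
theorem stmt_5 (n w δ : ℕ) (hn : 0 < n) (hw : 0 < w) (hδ : 0 < δ) (hwn : w ≤ n)
    (C : Finset (Fin n → ZMod 2))
    (hweight : ∀ c ∈ C, hammingNorm c = w)
    (hdist : ∀ c ∈ C, ∀ c' ∈ C, c ≠ c' → 2 * δ ≤ hammingDist c c') :
    (C.card : ℤ) * ((w : ℤ) ^ 2 - w * n + δ * n) ≤ (δ : ℤ) * n := by
  classical
  set M := C.card with hM
  rcases Nat.eq_zero_or_pos M with h0 | hpos
  · rw [h0]; push_cast
    simp only [zero_mul]
    positivity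
  set k : Fin n → ℕ := fun i => #(C.filter fun c => c i ≠ 0) with hk
  set t : (Fin n → ZMod 2) → (Fin n → ZMod 2) → ℕ :=
    fun c c' => #{i | c i ≠ 0 ∧ c' i ≠ 0} with ht
  -- Step A : column sums
  have hA : ∑ i, k i = M * w := by
    have h1 : ∑ i, k i = ∑ c ∈ C, hammingNorm c := by
      simp only [hk, Finset.card_filter]
      rw [Finset.sum_comm]
      refine Finset.sum_congr rfl fun c _ => ?_
      unfold hammingNorm; rw [Finset.card_filter]
    rw [h1, Finset.sum_congr rfl hweight, Finset.sum_const, smul_eq_mul]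
  -- Step B : sum of squares as double count
  have hB : ∑ i, (k i) ^ 2 = ∑ c ∈ C, ∑ c' ∈ C, t c c' := by
    have h1 : ∀ i, (k i) ^ 2
        = ∑ c ∈ C, ∑ c' ∈ C, (if c i ≠ 0 ∧ c' i ≠ 0 then (1:ℕ) else 0) := by
      intro i
      simp only [hk, Finset.card_filter, sq]
      rw [Finset.sum_mul_sum]
      refine Finset.sum_congr rfl fun c _ => Finset.sum_congr rfl fun c' _ => ?_
      split_ifs with h1 h2 h3 h4 <;> simp_all
    simp only [h1, ht]
    rw [Finset.sum_comm]
    refine Finset.sum_congr rfl fun c _ => ?_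
    rw [Finset.sum_comm]
    refine Finset.sum_congr rfl fun c' _ => ?_
    rw [Finset.card_filter]
  -- off-diagonal bound
  have hoff : ∀ c ∈ C, ∀ c' ∈ C, c ≠ c' → (t c c' : ℤ) ≤ (w : ℤ) - δ := by
    intro c hc c' hc' hne
    have h1 := inter_card n c c'
    have h2 := hdist c hc c' hc' hne
    rw [hweight c hc, hweight c' hc'] at h1
    have : (2 * t c c' + hammingDist c c' : ℤ) = w + w := by exact_mod_cast h1
    have : (2 * δ : ℤ) ≤ hammingDist c c' := by exact_mod_cast h2
    omega
  have hdiag : ∀ c ∈ C, (t c c : ℤ) = w := by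
    intro c hc
    have : t c c = hammingNorm c := by
      simp only [ht, hammingNorm, and_self]
    rw [this, hweight c hc]
  -- Step C : bound the double sum
  have hC : ∑ c ∈ C, ∑ c' ∈ C, (t c c' : ℤ)
      ≤ M * ((w : ℤ) + (M - 1) * ((w : ℤ) - δ)) := by
    have h1 : ∀ c ∈ C, ∑ c' ∈ C, (t c c' : ℤ)
        ≤ (w : ℤ) + (M - 1) * ((w : ℤ) - δ) := by
      intro c hc
      rw [← Finset.sum_erase_add C _ hc]
      have h2 : ∑ c' ∈ C.erase c, (t c c' : ℤ)
          ≤ (C.erase c).card • ((w : ℤ) - δ) := by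
        refine Finset.sum_le_card_nsmul _ _ _ fun c' hc' => ?_
        exact hoff c hc c' (Finset.mem_of_mem_erase hc') (Ne.symm (Finset.ne_of_mem_erase hc'))
      rw [Finset.card_erase_of_mem hc, nsmul_eq_mul] at h2
      have h3 : ((M - 1 : ℕ) : ℤ) = (M : ℤ) - 1 := by
        have : 1 ≤ M := hpos
        push_cast [this]; ring
      rw [h3] at h2
      have := hdiag c hc
      linarith
    calc ∑ c ∈ C, ∑ c' ∈ C, (t c c' : ℤ)
        ≤ ∑ _c ∈ C, ((w : ℤ) + (M - 1) * ((w : ℤ) - δ)) := Finset.sum_le_sum h1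
      _ = M * ((w : ℤ) + (M - 1) * ((w : ℤ) - δ)) := by
          rw [Finset.sum_const, nsmul_eq_mul]
  -- Step D : Cauchy-Schwarz
  have hD : ((M : ℤ) * w) ^ 2 ≤ (n : ℤ) * ∑ i, ((k i : ℤ)) ^ 2 := by
    have := sq_sum_le_card_mul_sum_sq (s := (Finset.univ : Finset (Fin n)))
      (f := fun i => (k i : ℤ))
    simpa [← Nat.cast_sum, hA] using this
  have hBZ : ∑ i, ((k i : ℤ)) ^ 2 = ∑ c ∈ C, ∑ c' ∈ C, (t c c' : ℤ) := by
    exact_mod_cast congrArg (fun x : ℕ => (x : ℤ)) hB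
  have hkey : ((M : ℤ) * w) ^ 2 ≤ (n : ℤ) * (M * ((w : ℤ) + (M - 1) * ((w : ℤ) - δ))) := by
    calc ((M : ℤ) * w) ^ 2 ≤ (n : ℤ) * ∑ i, ((k i : ℤ)) ^ 2 := hD
      _ = (n : ℤ) * ∑ c ∈ C, ∑ c' ∈ C, (t c c' : ℤ) := by rw [hBZ]
      _ ≤ _ := by
          have hn' : (0:ℤ) ≤ n := by positivity
          exact mul_le_mul_of_nonneg_left hC hn'
  -- final algebra
  have hM1 : (1 : ℤ) ≤ M := by exact_mod_cast hpos
  have hfin : (M : ℤ) * ((M : ℤ) * ((w : ℤ) ^ 2 - w * n + δ * n))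
      ≤ (M : ℤ) * ((δ : ℤ) * n) := by nlinarith [hkey]
  exact le_of_mul_le_mul_left hfin (by linarith)
end

section
/- Let q be a prime power and suppose L_1, …, L_ℓ are 2-dimensional subspaces of F_q^4 that pairwise intersect only in the zero vector, and suppose there exist nonzero vectors p_{i,1}, p_{i,2}, p_{i,3} ∈ L_i spanning pairwise distinct 1-dimensional subspaces, such that for all 1 ≤ s < t < u ≤ ℓ and all choices μ, ν, ω ∈ {1,2,3}, the vectors p_{s,μ}, p_{t,ν}, p_{u,ω} are linearly independent. Then 3·(ℓ − 1) + 1 ≤ q^2 + q + 1, and hence ℓ ≤ ⌊(q^2 + q + 3)/3⌋. -/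
open Submodule

lemma aux_count {F V : Type*} [Field F] [Fintype F] [AddCommGroup V] [Module F V]
    [Module.Finite F V] {ι : Type*} [Fintype ι]
    (hd : Module.finrank F V = 3) (w : ι → V) (hw0 : ∀ t, w t ≠ 0)
    (hws : ∀ s t, s ≠ t → ∀ c : F, w s ≠ c • w t) :
    Fintype.card ι ≤ Fintype.card F ^ 2 + Fintype.card F + 1 := by
  have hfin : Finite V := Module.finite_of_finite F
  have : Fintype V := Fintype.ofFinite V
  classical
  -- the injection
  have hinj : Function.Injective
      (fun tc : ι × {c : F // c ≠ 0} => (⟨tc.2.1 • w tc.1,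
        smul_ne_zero tc.2.2 (hw0 tc.1)⟩ : {v : V // v ≠ 0})) := by
    rintro ⟨s, a, ha⟩ ⟨t, b, hb⟩ h
    simp only [Subtype.mk_eq_mk] at h
    by_cases hst : s = t
    · subst hst
      have : (a - b) • w s = 0 := by rw [sub_smul, h, sub_self]
      rcases smul_eq_zero.1 this with h' | h'
      · simp [sub_eq_zero.1 h']
      · exact absurd h' (hw0 s)
    · exfalso
      apply hws s t hst (a⁻¹ * b)
      rw [mul_smul, ← h, inv_smul_smul₀ ha]
  have hcard := Fintype.card_le_of_injective _ hinj
  rw [Fintype.card_prod] at hcard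
  have h1 : Fintype.card {c : F // c ≠ 0} = Fintype.card F - 1 := by
    rw [Fintype.card_subtype_compl, Fintype.card_subtype_eq]
  have h2 : Fintype.card {v : V // v ≠ 0} = Fintype.card F ^ 3 - 1 := by
    rw [Fintype.card_subtype_compl, Fintype.card_subtype_eq,
      Module.card_eq_pow_finrank (K := F) (V := V), hd]
  rw [h1, h2] at hcard
  have hq2 : 2 ≤ Fintype.card F := Fintype.one_lt_card
  obtain ⟨m, hm'⟩ : ∃ m, Fintype.card F = m + 1 := ⟨Fintype.card F - 1, by omega⟩
  rw [hm'] at hcard ⊢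
  have hm : 1 ≤ m := by omega
  have he : (m + 1) ^ 3 - 1 = ((m + 1) ^ 2 + (m + 1) + 1) * m := by
    have : (m + 1) ^ 3 = ((m + 1) ^ 2 + (m + 1) + 1) * m + 1 := by ring
    omega
  rw [he] at hcard
  have : Fintype.card ι * m ≤ ((m + 1) ^ 2 + (m + 1) + 1) * m := by simpa using hcard
  exact Nat.le_of_mul_le_mul_right this hm

/-- If `L_1, …, L_ℓ` are pairwise (trivially-intersecting) 2-dimensional
subspaces of `F_q^4` carrying triples of points `p_{i,1}, p_{i,2}, p_{i,3}`
spanning pairwise distinct 1-dimensional subspaces, such that any three points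
from three distinct lines are linearly independent, then
`3(ℓ−1) + 1 ≤ q² + q + 1` and `ℓ ≤ ⌊(q² + q + 3)/3⌋`. -/
theorem stmt_19 (q : ℕ) (F : Type*) [Field F] [Fintype F] (hq : Fintype.card F = q)
    (ℓ : ℕ) (hℓ : 0 < ℓ) (L : Fin ℓ → Submodule F (Fin 4 → F))
    (hdim : ∀ i, Module.finrank F (L i) = 2)
    (hdisj : ∀ i j, i ≠ j → L i ⊓ L j = ⊥)
    (p : Fin ℓ → Fin 3 → (Fin 4 → F))
    (hp0 : ∀ i μ, p i μ ≠ 0)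
    (hpL : ∀ i μ, p i μ ∈ L i)
    (hpdist : ∀ i, ∀ μ ν : Fin 3, μ ≠ ν →
      Submodule.span F {p i μ} ≠ Submodule.span F {p i ν})
    (hind : ∀ s t u : Fin ℓ, s < t → t < u → ∀ μ ν ω : Fin 3,
      LinearIndependent F ![p s μ, p t ν, p u ω]) :
    3 * (ℓ - 1) + 1 ≤ q ^ 2 + q + 1 ∧ ℓ ≤ (q ^ 2 + q + 3) / 3 := by
  obtain ⟨n, rfl⟩ : ∃ n, ℓ = n + 1 := ⟨ℓ - 1, by omega⟩
  set u : Fin (n + 1) := Fin.last n with hu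
  set W : Submodule F (Fin 4 → F) := Submodule.span F {p u 0} with hW
  -- basic facts
  have hx0 : p u 0 ≠ 0 := hp0 u 0
  have hzero : ∀ (i j : Fin (n + 1)) (v : Fin 4 → F), i ≠ j → v ∈ L i → v ∈ L j → v = 0 := by
    intro i j v hij hvi hvj
    have : v ∈ L i ⊓ L j := ⟨hvi, hvj⟩
    rwa [hdisj i j hij, Submodule.mem_bot] at this
  have hspan : ∀ (i : Fin (n+1)) (μ ν : Fin 3) (c : F), μ ≠ ν → p i μ = c • p i ν → False := by
    intro i μ ν c hμν h
    rcases eq_or_ne c 0 with rfl | hc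
    · simp only [zero_smul] at h; exact hp0 i μ h
    · exact hpdist i μ ν hμν (by rw [h, Submodule.span_singleton_smul_eq (IsUnit.mk0 c hc)])
  -- the quotient space
  have hmem : ∀ (a b : Fin 4 → F) (c : F), W.mkQ a = c • W.mkQ b →
      ∃ d : F, a = c • b + d • p u 0 := by
    intro a b c h
    have : W.mkQ (a - c • b) = 0 := by
      rw [map_sub, map_smul, h, sub_self]
    rw [Submodule.mkQ_apply, Submodule.Quotient.mk_eq_zero] at this
    rw [hW, Submodule.mem_span_singleton] at this
    obtain ⟨d, hd⟩ := this
    exact ⟨d, by rw [hd]; abel⟩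
  -- index type and family
  set w : Option (Fin n × Fin 3) → ((Fin 4 → F) ⧸ W) := fun t => match t with
    | none => W.mkQ (p u 1)
    | some (i, μ) => W.mkQ (p i.castSucc μ) with hw
  have hne : ∀ i : Fin n, (i.castSucc : Fin (n+1)) ≠ u := fun i => Fin.ne_of_lt (Fin.castSucc_lt_last i)
  -- nonzero
  have hw0 : ∀ t, w t ≠ 0 := by
    rintro (_ | ⟨i, μ⟩) h
    · rw [hw] at h
      simp only [Submodule.mkQ_apply, Submodule.Quotient.mk_eq_zero, hW,
        Submodule.mem_span_singleton] at h
      obtain ⟨d, hd⟩ := h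
      exact hspan u 1 0 d (by decide) hd.symm
    · rw [hw] at h
      simp only [Submodule.mkQ_apply, Submodule.Quotient.mk_eq_zero] at h
      have : p i.castSucc μ ∈ L u := Submodule.span_le.2 (by
        simp only [Set.singleton_subset_iff]; exact hpL u 0) h
      exact hp0 _ _ (hzero _ _ _ (hne i) (hpL _ _) this)
  -- the independence contradiction helper
  have hind3 : ∀ (i j : Fin n) (μ ν : Fin 3) (c d : F), i.castSucc < j.castSucc →
      p i.castSucc μ = c • p j.castSucc ν + d • p u 0 → False := by
    intro i j μ ν c d hij h
    have hli := hind i.castSucc j.castSucc u hij (Fin.castSucc_lt_last j) μ ν 0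
    rw [Fintype.linearIndependent_iff] at hli
    have := hli ![1, -c, -d] (by
      simp only [Fin.sum_univ_three, Matrix.cons_val_zero, Matrix.cons_val_one,
        Matrix.head_cons, Matrix.cons_val_two, Matrix.tail_cons]
      rw [h]; module) 0
    simp at this
  -- distinct spans hypothesis
  have hws : ∀ s t : Option (Fin n × Fin 3), s ≠ t → ∀ c : F, w s ≠ c • w t := by
    rintro (_ | ⟨i, μ⟩) (_ | ⟨j, ν⟩) hst c h <;> rw [hw] at h <;>
      simp only [← Submodule.mkQ_apply] at h
    · exact hst rfl
    · -- w none = c • w (some (j,ν)) : p u 1 = c • p j ν + d • p u 0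
      obtain ⟨d, hd⟩ := hmem _ _ _ h
      have h1 : c • p j.castSucc ν = p u 1 - d • p u 0 := by rw [hd]; abel
      have h2 : c • p j.castSucc ν ∈ L u := h1 ▸ sub_mem (hpL u 1) (Submodule.smul_mem _ _ (hpL u 0))
      have h3 : c • p j.castSucc ν = 0 :=
        hzero _ _ _ (hne j) (Submodule.smul_mem _ _ (hpL _ _)) h2
      rw [h3, eq_comm, sub_eq_zero] at h1
      exact hspan u 1 0 d (by decide) h1
    · -- p i μ = c • p u 1 + d • p u 0 ∈ L u
      obtain ⟨d, hd⟩ := hmem _ _ _ h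
      have h2 : p i.castSucc μ ∈ L u := hd ▸ add_mem (Submodule.smul_mem _ _ (hpL u 1))
        (Submodule.smul_mem _ _ (hpL u 0))
      exact hp0 _ _ (hzero _ _ _ (hne i) (hpL _ _) h2)
    · -- p i μ = c • p j ν + d • p u 0
      obtain ⟨d, hd⟩ := hmem _ _ _ h
      rcases eq_or_ne i j with rfl | hij
      · have hμν : μ ≠ ν := by
          intro hμν; exact hst (by rw [hμν])
        have h1 : p i.castSucc μ - c • p i.castSucc ν = d • p u 0 := by rw [hd]; abel
        have h2 : d • p u 0 ∈ L i.castSucc := h1 ▸ sub_mem (hpL _ _) (Submodule.smul_mem _ _ (hpL _ _))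
        have h3 : d • p u 0 = 0 := hzero u i.castSucc _ (Ne.symm (hne i))
          (Submodule.smul_mem _ _ (hpL u 0)) h2
        rw [h3, sub_eq_zero] at h1
        exact hspan i.castSucc μ ν c hμν h1
      · rcases lt_or_gt_of_ne hij with hlt | hlt
        · -- i < j : p i μ = c • p j ν + d • p u 0 contradicts independence
          exact hind3 i j μ ν c d (by simpa using hlt) hd
        · -- j < i : rewrite as relation on p j ν
          have hli := hind j.castSucc i.castSucc u (by simpa using hlt)
            (Fin.castSucc_lt_last i) ν μ 0
          rw [Fintype.linearIndependent_iff] at hli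
          have := hli ![-c, 1, -d] (by
            simp only [Fin.sum_univ_three, Matrix.cons_val_zero, Matrix.cons_val_one,
              Matrix.head_cons, Matrix.cons_val_two, Matrix.tail_cons]
            rw [hd]; module) 1
          simp at this
  -- apply the counting lemma
  have hrank : Module.finrank F ((Fin 4 → F) ⧸ W) = 3 := by
    have h1 := W.finrank_quotient_add_finrank
    have h2 : Module.finrank F W = 1 := finrank_span_singleton hx0
    rw [h2, Module.finrank_fin_fun] at h1
    omega
  have hcount := aux_count (F := F) hrank w hw0 hws
  have hcι : Fintype.card (Option (Fin n × Fin 3)) = 3 * n + 1 := by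
    simp [Fintype.card_option, Fintype.card_prod]; ring
  rw [hcι, hq] at hcount
  constructor
  · simpa using hcount
  · rw [Nat.le_div_iff_mul_le (by norm_num)]
    omega
end
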